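/- (Erdős–Stone–Simonovits) If H is a graph with chromatic number χ(H) = r+1 ≥ 2, then ex(n,H) = |E(T_{n,r})| + o(n²); that is, for every ε > 0 there exists n_0 such that for all n ≥ n_0, |ex(n,H) − |E(T_{n,r})|| ≤ εn². -/

import Mathlib

open SimpleGraph

/-- The degree of a vertex, defined without decidability assumptions. -/
noncomputable def gdeg {V : Type*} [Fintype V] (G : SimpleGraph V) (v : V) : ℕ :=
  {w | G.Adj v w}.ncard

/-- The multiset of vertex degrees of a finite simple graph. -/
noncomputable def degMultiset {V : Type*} [Fintype V] (G : SimpleGraph V) : Multiset ℕ :=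
  Finset.univ.val.map (gdeg G)

/-- A finite sequence of naturals is *graphic* if it is the degree sequence of
a finite simple graph (a *realization*). -/
def IsGraphic (π : List ℕ) : Prop :=
  ∃ G : SimpleGraph (Fin π.length), degMultiset G = (π : Multiset ℕ)

/-- `H` is contained in `G` as a (not necessarily induced) subgraph. -/
def ContainsSub {V : Type*} {W : Type*} (H : SimpleGraph V) (G : SimpleGraph W) : Prop :=
  ∃ f : V → W, Function.Injective f ∧ ∀ ⦃a b⦄, H.Adj a b → G.Adj (f a) (f b)

/-- `π` is *potentially `H`-graphic*: some realization of `π` contains `H` as a subgraph. -/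
def PotentiallyGraphic {V : Type*} (H : SimpleGraph V) (π : List ℕ) : Prop :=
  ∃ G : SimpleGraph (Fin π.length), degMultiset G = (π : Multiset ℕ) ∧ ContainsSub H G

/-- The potential number `σ(H,n)`: the minimum even integer such that every
(nonincreasing) graphic sequence of length `n` with sum at least that integer is
potentially `H`-graphic. -/
noncomputable def potentialNumber {V : Type*} (H : SimpleGraph V) (n : ℕ) : ℕ :=
  sInf {s : ℕ | Even s ∧ ∀ π : List ℕ, π.length = n → π.Pairwise (· ≥ ·) →
      IsGraphic π → s ≤ π.sum → PotentiallyGraphic H π}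

/-- The maximum degree `Δ(G)` of a finite graph. -/
noncomputable def maxDeg {V : Type*} [Fintype V] (G : SimpleGraph V) : ℕ :=
  Finset.univ.sup (gdeg G)

/-- The independence number `α(G)`. -/
noncomputable def indepNum {V : Type*} [Fintype V] (G : SimpleGraph V) : ℕ :=
  sSup {k | ∃ s : Finset V, s.card = k ∧ (s : Set V).Pairwise fun a b => ¬ G.Adj a b}

/-- `∇_i(H)`: the minimum of `Δ(F)` over induced subgraphs `F` of `H` of order `i`. -/
noncomputable def nabla {V : Type*} [Fintype V] (H : SimpleGraph V) (i : ℕ) : ℕ :=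
  sInf {d | ∃ s : Finset V, s.card = i ∧ maxDeg (SimpleGraph.induce (s : Set V) H) = d}

/-- The sequence `π̃_i(H,n) = ((n-1)^{k-i}, (k-i+∇_i(H)-1)^{n-k+i})`, with the last
term reduced by one if the sum would otherwise be odd. -/
noncomputable def tildePi {V : Type*} [Fintype V] (H : SimpleGraph V) (i n : ℕ) : List ℕ :=
  let k := Fintype.card V
  let d := k - i + nabla H i - 1
  let base := List.replicate (k - i) (n - 1) ++ List.replicate (n - k + i) d
  if Even base.sum then base else base.dropLast ++ [d - 1]

/-- `σ̃_i(H) = 2(k-i) + ∇_i(H) - 1`. -/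
noncomputable def sigmaTildeI {V : Type*} [Fintype V] (H : SimpleGraph V) (i : ℕ) : ℕ :=
  2 * (Fintype.card V - i) + nabla H i - 1

/-- `σ̃(H) = max_{α(H)+1 ≤ i ≤ k} σ̃_i(H)`. -/
noncomputable def sigmaTilde {V : Type*} [Fintype V] (H : SimpleGraph V) : ℕ :=
  (Finset.Icc (_root_.indepNum H + 1) (Fintype.card V)).sup (sigmaTildeI H)

/-- The family `P(H,n)` of extremal nonrealizing sequences. -/
noncomputable def potSet {V : Type*} [Fintype V] (H : SimpleGraph V) (n : ℕ) : Set (List ℕ) :=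
  {π | ∃ i ∈ Finset.Icc (_root_.indepNum H + 1) (Fintype.card V),
      sigmaTildeI H i = sigmaTilde H ∧ π = tildePi H i n}

/-- `i*(H)`: the least index `i ∈ {α(H)+1, …, k}` with `σ̃_i(H) = σ̃(H)`. -/
noncomputable def iStar {V : Type*} [Fintype V] (H : SimpleGraph V) : ℕ :=
  sInf {i | i ∈ Finset.Icc (_root_.indepNum H + 1) (Fintype.card V) ∧ sigmaTildeI H i = sigmaTilde H}

/-- `‖π₁ - π₂‖ = Σ_j |x_j - y_j|`, padding the shorter sequence with zeros. -/
def seqDist (π₁ π₂ : List ℕ) : ℕ :=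
  ((List.range (max π₁.length π₂.length)).map fun j =>
    Nat.dist (π₁.getD j 0) (π₂.getD j 0)).sum

/-- `H` is stable with respect to the potential number (σ-stable). -/
def SigmaStable {V : Type*} [Fintype V] (H : SimpleGraph V) : Prop :=
  ∀ ε : ℝ, 0 < ε → ∃ δ : ℝ, 0 < δ ∧ ∃ n₀ : ℕ, ∀ n : ℕ, n₀ ≤ n →
    ∀ π : List ℕ, π.length = n → π.Pairwise (· ≥ ·) → IsGraphic π →
      ¬ PotentiallyGraphic H π →
      (potentialNumber H n : ℝ) - δ * n ≤ (π.sum : ℝ) →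
      ∃ π' ∈ potSet H n, (seqDist π π' : ℝ) < ε * n

/-- The nonincreasing degree sequence of a finite graph. -/
noncomputable def degList {V : Type*} [Fintype V] (G : SimpleGraph V) : List ℕ :=
  ((degMultiset G).sort (· ≤ ·)).reverse

/-- `π` is degree-sufficient for `H`: termwise, `π` dominates the nonincreasing
degree sequence of `H`. -/
def DegreeSufficient {V : Type*} [Fintype V] (H : SimpleGraph V) (π : List ℕ) : Prop :=
  Fintype.card V ≤ π.length ∧ ∀ i < Fintype.card V, (degList H).getD i 0 ≤ π.getD i 0

/-- `H` is weakly σ-stable. -/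
def WeaklySigmaStable {V : Type*} [Fintype V] (H : SimpleGraph V) : Prop :=
  ∀ ε : ℝ, 0 < ε → ∃ δ : ℝ, 0 < δ ∧ ∃ n₀ : ℕ, ∀ n : ℕ, n₀ ≤ n →
    ∀ π : List ℕ, π.length = n → π.Pairwise (· ≥ ·) → IsGraphic π →
      DegreeSufficient H π →
      ¬ PotentiallyGraphic H π →
      (potentialNumber H n : ℝ) - δ * n ≤ (π.sum : ℝ) →
      ∃ π' ∈ potSet H n, (seqDist π π' : ℝ) < ε * n

/-- The join `G ∨ H` of two graphs on disjoint vertex sets. -/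
def graphJoin {V : Type*} {W : Type*} (G : SimpleGraph V) (H : SimpleGraph W) :
    SimpleGraph (V ⊕ W) where
  Adj x y :=
    match x, y with
    | .inl a, .inl b => G.Adj a b
    | .inr a, .inr b => H.Adj a b
    | .inl _, .inr _ => True
    | .inr _, .inl _ => True
  symm := by
    constructor
    rintro (a | a) (b | b) h
    · exact G.adj_symm h
    · trivial
    · trivial
    · exact H.adj_symm h
  loopless := by
    constructor
    rintro (a | a) h
    · exact G.loopless.irrefl a h
    · exact H.loopless.irrefl a h

/-- The double star `S_{x,y}`: two adjacent centers (vertices `0` and `1`), with the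
first center adjacent to `x` leaves and the second to `y` leaves, so that the centers
have degrees `x+1` and `y+1`. -/
def doubleStar (x y : ℕ) : SimpleGraph (Fin (x + y + 2)) :=
  SimpleGraph.fromRel fun a b =>
    (a.val = 0 ∧ b.val = 1) ∨
    (a.val = 0 ∧ 2 ≤ b.val ∧ b.val < x + 2) ∨
    (a.val = 1 ∧ x + 2 ≤ b.val)

/-- Laying off the term at (0-based) position `i`: delete it and subtract one from
the `d_i` largest remaining terms. -/
def layOffAt (π : List ℕ) (i : ℕ) : List ℕ :=
  let d := π.getD i 0
  let rest := π.take i ++ π.drop (i + 1)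
  (rest.take d).map (· - 1) ++ rest.drop d

/-- The extremal number `ex(n,H)`: the maximum number of edges of an `H`-free simple graph
on `n` vertices. -/
noncomputable def exNum (n : ℕ) {W : Type*} (H : SimpleGraph W) : ℕ :=
  sSup {m | ∃ G : SimpleGraph (Fin n), ¬ ContainsSub H G ∧ G.edgeSet.ncard = m}

section ErdosStoneAux
set_option maxHeartbeats 1000000
open Finset


def MP {V : Type*} (G : SimpleGraph V) (ρ t : ℕ) : Prop :=
  ∃ f : Fin ρ → Fin t → V, (Function.Injective fun p : Fin ρ × Fin t => f p.1 p.2) ∧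
    ∀ ⦃i j : Fin ρ⦄, ∀ ⦃a b : Fin t⦄, i ≠ j → G.Adj (f i a) (f j b)


lemma mp_mono {V V' : Type*} {G : SimpleGraph V} {G' : SimpleGraph V'} (φ : V → V')
    (hinj : Function.Injective φ) (hadj : ∀ ⦃a b⦄, G.Adj a b → G'.Adj (φ a) (φ b))
    {ρ t : ℕ} (h : MP G ρ t) : MP G' ρ t := by
  obtain ⟨f, hf, hfa⟩ := h
  exact ⟨fun i a => φ (f i a), fun p q hpq => hf (hinj hpq),
    fun i j a b hij => hadj (hfa hij)⟩

lemma mp_one {V : Type*} [Fintype V] {G : SimpleGraph V} {s : ℕ}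
    (h : s ≤ Fintype.card V) : MP G 1 s := by
  obtain ⟨e⟩ := Function.Embedding.nonempty_of_card_le (by simpa using h :
    Fintype.card (Fin s) ≤ Fintype.card V)
  refine ⟨fun _ a => e a, ?_, ?_⟩
  · intro p q hpq
    have : p.2 = q.2 := e.injective hpq
    exact Prod.ext (Subsingleton.elim _ _) this
  · intro i j a b hij
    exact absurd (Subsingleton.elim i j) hij

lemma ncard_neighborSet_eq_card_filter {V : Type*} [Fintype V] (G : SimpleGraph V)
    [DecidableRel G.Adj] [DecidableEq V] (v : V) :
    (G.neighborSet v).ncard = (univ.filter (G.Adj v)).card := by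
  rw [Set.ncard_eq_toFinset_card', ← neighborFinset_def, neighborFinset_eq_filter]

lemma mp_step {V : Type*} [Fintype V] {G : SimpleGraph V} {ρ s t : ℕ} {ε : ℝ}
    (hρ : 1 ≤ ρ) (ht : 1 ≤ t) (hts : t ≤ s) (hε : 0 < ε)
    (hst : (t : ℝ) ≤ ρ * s * ε / 2)
    (hbig : (((2 ^ s) ^ ρ * (t - 1) : ℕ) : ℝ) < ε / 2 * Fintype.card V)
    (hmp : MP G ρ s)
    (hdeg : ∀ v : V, (1 - 1/ρ + ε) * Fintype.card V ≤ ((G.neighborSet v).ncard : ℝ)) :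
    MP G (ρ + 1) t := by
  classical
  obtain ⟨f, hfinj, hfadj⟩ := hmp
  set n := Fintype.card V with hn
  -- traces
  set σ : V → Fin ρ → Finset (Fin s) := fun v i => univ.filter fun a => G.Adj v (f i a)
    with hσ
  have hdeg2 : ∀ v : V, (1 - 1/ρ + ε) * n ≤ ((univ.filter (G.Adj v)).card : ℝ) := by
    intro v
    have := hdeg v
    rwa [ncard_neighborSet_eq_card_filter] at this
  -- double counting identity
  have key : ∀ u : V, (univ.filter fun v => G.Adj v u).card = (univ.filter (G.Adj u)).card := by
    intro u
    congr 1
    apply Finset.filter_congr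
    intro v _
    simp [adj_comm]
  have A : ∑ v : V, ∑ i : Fin ρ, ((σ v i).card : ℝ)
      = ∑ i : Fin ρ, ∑ a : Fin s, ((univ.filter (G.Adj (f i a))).card : ℝ) := by
    rw [Finset.sum_comm]
    refine Finset.sum_congr rfl fun i _ => ?_
    have h1 : ∀ v : V, ((σ v i).card : ℝ)
        = ∑ a : Fin s, (if G.Adj v (f i a) then (1:ℝ) else 0) :=
      fun v => (Finset.sum_boole _ _).symm
    simp_rw [h1]
    rw [Finset.sum_comm]
    refine Finset.sum_congr rfl fun a _ => ?_
    rw [Finset.sum_boole, key (f i a)]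
  -- lower bound
  have spos : (0:ℝ) < s := by exact_mod_cast lt_of_lt_of_le ht hts
  have hρR : (1:ℝ) ≤ (ρ:ℝ) := by exact_mod_cast hρ
  have hρ0 : (ρ:ℝ) ≠ 0 := by positivity
  have lower : (ρ:ℝ) * s * ((1 - 1/ρ + ε) * n) ≤ ∑ v : V, ∑ i : Fin ρ, ((σ v i).card : ℝ) := by
    rw [A]
    have : (ρ:ℝ) * s * ((1 - 1/ρ + ε) * n)
        = ∑ _i : Fin ρ, ∑ _a : Fin s, (1 - 1/ρ + ε) * (n:ℝ) := by
      simp [Finset.sum_const]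
      ring
    rw [this]
    exact Finset.sum_le_sum fun i _ => Finset.sum_le_sum fun a _ => hdeg2 (f i a)
  -- upper bound via good vertices
  set good : Finset V := univ.filter (fun v => ∀ i, t ≤ (σ v i).card) with hgood
  set g := good.card with hg
  have hgn : g ≤ n := le_trans (Finset.card_filter_le _ _) (by simp [hn])
  have σcard_le : ∀ v i, ((σ v i).card : ℝ) ≤ s := by
    intro v i
    exact_mod_cast le_trans (Finset.card_filter_le _ _) (by simp)
  have upper : ∑ v : V, ∑ i : Fin ρ, ((σ v i).card : ℝ)
      ≤ g * (ρ * s) + ((n:ℝ) - g) * (((ρ:ℝ) - 1) * s + ((t:ℝ) - 1)) := by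
    have hsplit := Finset.sum_filter_add_sum_filter_not univ
      (fun v => ∀ i, t ≤ (σ v i).card) (fun v => ∑ i : Fin ρ, ((σ v i).card : ℝ))
    rw [← hsplit]
    have h1 : ∑ v ∈ good, ∑ i : Fin ρ, ((σ v i).card : ℝ) ≤ g * (ρ * s) := by
      calc ∑ v ∈ good, ∑ i : Fin ρ, ((σ v i).card : ℝ)
          ≤ ∑ _v ∈ good, ∑ _i : Fin ρ, (s:ℝ) :=
            Finset.sum_le_sum fun v _ => Finset.sum_le_sum fun i _ => σcard_le v i
        _ = g * (ρ * s) := by simp [Finset.sum_const, ← hg]; try ring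
    have h2 : ∑ v ∈ univ.filter (fun v => ¬ ∀ i, t ≤ (σ v i).card),
        ∑ i : Fin ρ, ((σ v i).card : ℝ)
        ≤ ((n:ℝ) - g) * (((ρ:ℝ) - 1) * s + ((t:ℝ) - 1)) := by
      have hbadcard : ((univ.filter (fun v => ¬ ∀ i, t ≤ (σ v i).card)).card : ℝ)
          = (n:ℝ) - g := by
        have := Finset.card_filter_add_card_filter_not
          (s := (univ : Finset V)) (p := fun v => ∀ i, t ≤ (σ v i).card)
        have hc : g + (univ.filter (fun v => ¬ ∀ i, t ≤ (σ v i).card)).card = n := by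
          rw [hg, hgood]
          simpa [hn] using this
        have := congrArg (fun x : ℕ => (x:ℝ)) hc
        push_cast at this
        linarith
      calc ∑ v ∈ univ.filter (fun v => ¬ ∀ i, t ≤ (σ v i).card),
            ∑ i : Fin ρ, ((σ v i).card : ℝ)
          ≤ ∑ _v ∈ univ.filter (fun v => ¬ ∀ i, t ≤ (σ v i).card),
            (((ρ:ℝ) - 1) * s + ((t:ℝ) - 1)) := by
            refine Finset.sum_le_sum fun v hv => ?_
            rw [Finset.mem_filter] at hv
            push_neg at hv
            obtain ⟨i₀, hi₀⟩ := hv.2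
            have hi₀' : ((σ v i₀).card : ℝ) ≤ (t:ℝ) - 1 := by
              have : (σ v i₀).card + 1 ≤ t := hi₀
              have := (Nat.cast_le (α := ℝ)).2 this
              push_cast at this
              linarith
            rw [← Finset.sum_erase_add _ _ (Finset.mem_univ i₀)]
            have herase : ∑ i ∈ univ.erase i₀, ((σ v i).card : ℝ) ≤ ((ρ:ℝ) - 1) * s := by
              calc ∑ i ∈ univ.erase i₀, ((σ v i).card : ℝ)
                  ≤ ∑ _i ∈ univ.erase i₀, (s:ℝ) :=
                    Finset.sum_le_sum fun i _ => σcard_le v i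
                _ = ((ρ:ℝ) - 1) * s := by
                    rw [Finset.sum_const, Finset.card_erase_of_mem (Finset.mem_univ i₀)]
                    simp [Nat.cast_sub hρ]
            linarith
        _ = ((n:ℝ) - g) * (((ρ:ℝ) - 1) * s + ((t:ℝ) - 1)) := by
            rw [Finset.sum_const, nsmul_eq_mul, hbadcard]
    exact add_le_add h1 h2
  -- extract the good-count lower bound
  have hgl : ε / 2 * n ≤ (g:ℝ) := by
    have hcomb : (ρ:ℝ) * s * ((1 - 1/ρ + ε) * n)
        ≤ g * (ρ * s) + ((n:ℝ) - g) * (((ρ:ℝ) - 1) * s + ((t:ℝ) - 1)) :=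
      le_trans lower upper
    have hinv : (ρ:ℝ) * (1/ρ) = 1 := by field_simp
    have hN0 : (0:ℝ) ≤ (n:ℝ) := Nat.cast_nonneg n
    have hg0 : (0:ℝ) ≤ (g:ℝ) := Nat.cast_nonneg g
    have hgnR : (g:ℝ) ≤ (n:ℝ) := by exact_mod_cast hgn
    have htR : (1:ℝ) ≤ (t:ℝ) := by exact_mod_cast ht
    have htsR : (t:ℝ) ≤ (s:ℝ) := by exact_mod_cast hts
    have hinv2 : (ρ:ℝ) * s * ((1/ρ) * n) = (s:ℝ) * n := by
      field_simp
    -- expand: ρ s ε n ≤ g (s - t + 1) + n (t - 1)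
    have hexp : (ρ:ℝ) * s * ε * n ≤ g * ((s:ℝ) - t + 1) + (n:ℝ) * ((t:ℝ) - 1) := by
      nlinarith [hcomb, hinv2]
    have h5 : (ρ:ℝ) * s * ε * n / 2 ≤ (g:ℝ) * s := by
      nlinarith [hexp, mul_le_mul_of_nonneg_left hst hN0,
        mul_nonneg hg0 (sub_nonneg.2 htR)]
    have h6 : (ρ:ℝ) * ε * n / 2 ≤ (g:ℝ) := by
      nlinarith [h5, spos]
    nlinarith [h6, mul_nonneg (mul_nonneg hε.le hN0) (sub_nonneg.2 hρR)]
  -- pigeonhole on traces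
  have hM : ((univ : Finset (Fin ρ → Finset (Fin s)))).card = (2^s)^ρ := by
    simp [Finset.card_univ, Fintype.card_fun, Fintype.card_finset]
  have hlt : ((univ : Finset (Fin ρ → Finset (Fin s)))).card * (t-1) < good.card := by
    have h7 : (((2^s)^ρ * (t-1) : ℕ) : ℝ) < (g:ℝ) := lt_of_lt_of_le hbig hgl
    have h8 : ((2:ℕ)^s)^ρ * (t-1) < g := by exact_mod_cast h7
    rw [hM, ← hg]
    exact h8
  obtain ⟨σ₀, -, hσ₀⟩ := Finset.exists_lt_card_fiber_of_mul_lt_card_of_maps_to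
    (f := fun v => σ v) (fun a _ => Finset.mem_univ _) hlt
  have htle : t ≤ (good.filter fun v => σ v = σ₀).card := by omega
  obtain ⟨F', hF'sub, hF'card⟩ := Finset.exists_subset_card_eq htle
  have hF'good : ∀ v ∈ F', (∀ i, t ≤ (σ v i).card) ∧ σ v = σ₀ := by
    intro v hv
    have h9 := hF'sub hv
    rw [Finset.mem_filter] at h9
    have h10 := h9.1
    rw [hgood, Finset.mem_filter] at h10
    exact ⟨h10.2, h9.2⟩
  have hF'ne : F'.Nonempty := by
    rw [← Finset.card_pos, hF'card]; omega
  have hσ₀card : ∀ i, t ≤ (σ₀ i).card := by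
    obtain ⟨v, hv⟩ := hF'ne
    intro i
    have h := hF'good v hv
    rw [← h.2]
    exact h.1 i
  have hTex : ∀ i, ∃ T ⊆ σ₀ i, T.card = t := fun i => Finset.exists_subset_card_eq (hσ₀card i)
  choose T hTsub hTcard using hTex
  have hadjF : ∀ v ∈ F', ∀ (i : Fin ρ) (a : Fin s), a ∈ T i → G.Adj v (f i a) := by
    intro v hv i a ha
    have h2 := (hF'good v hv).2
    have h3 : a ∈ σ v i := by rw [h2]; exact hTsub i ha
    have h4 : a ∈ univ.filter (fun a => G.Adj v (f i a)) := h3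
    rw [Finset.mem_filter] at h4
    exact h4.2
  -- build the (ρ+1)-partite structure
  have hcF : Fintype.card {x // x ∈ F'} = t := by rw [Fintype.card_coe]; exact hF'card
  have hcT : ∀ i, Fintype.card {x // x ∈ T i} = t := fun i => by
    rw [Fintype.card_coe]; exact hTcard i
  let eF : Fin t ≃ {x // x ∈ F'} := (Fintype.equivFinOfCardEq hcF).symm
  let eT : ∀ i : Fin ρ, Fin t ≃ {x // x ∈ T i} := fun i => (Fintype.equivFinOfCardEq (hcT i)).symm
  let g' : Fin (ρ+1) → Fin t → V :=
    Fin.lastCases (fun a => ((eF a : V))) (fun i a => f i ((eT i a : Fin s)))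
  have hglast : ∀ a, g' (Fin.last ρ) a = ((eF a : V)) := by
    intro a
    simp only [g']
    rw [Fin.lastCases_last]
  have hgcast : ∀ (i : Fin ρ) (a), g' i.castSucc a = f i ((eT i a : Fin s)) := by
    intro i a
    simp only [g']
    rw [Fin.lastCases_castSucc]
  have hmemF : ∀ a : Fin t, ((eF a : V)) ∈ F' := fun a => (eF a).2
  have hinjpair : ∀ (i j : Fin ρ) (a b : Fin t),
      f i ((eT i a : Fin s)) = f j ((eT j b : Fin s)) → i = j ∧ a = b := by
    intro i j a b h
    have hp := hfinj (a₁ := (i, ((eT i a : Fin s)))) (a₂ := (j, ((eT j b : Fin s)))) h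
    rw [Prod.mk.injEq] at hp
    obtain ⟨hij, hab⟩ := hp
    subst hij
    refine ⟨rfl, ?_⟩
    have : (eT i a) = (eT i b) := Subtype.ext hab
    exact (eT i).injective this
  have hcross : ∀ (b : Fin t) (i : Fin ρ) (a : Fin t), G.Adj ((eF b : V)) (f i ((eT i a : Fin s))) :=
    fun b i a => hadjF _ (hmemF b) i _ (eT i a).2
  refine ⟨g', ?_, ?_⟩
  · rintro ⟨i, a⟩ ⟨j, b⟩ h
    simp only at h
    rcases Fin.eq_castSucc_or_eq_last i with ⟨i', rfl⟩ | rfl <;>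
      rcases Fin.eq_castSucc_or_eq_last j with ⟨j', rfl⟩ | rfl
    · rw [hgcast, hgcast] at h
      obtain ⟨hij, hab⟩ := hinjpair _ _ _ _ h
      subst hij; subst hab; rfl
    · rw [hgcast, hglast] at h
      exact absurd (h ▸ hcross b i' a) (G.loopless.irrefl _)
    · rw [hglast, hgcast] at h
      exact absurd (h.symm ▸ hcross a j' b) (G.loopless.irrefl _)
    · rw [hglast, hglast] at h
      have : eF a = eF b := Subtype.ext h
      have hab := eF.injective this
      subst hab; rfl
  · intro i j a b hij
    rcases Fin.eq_castSucc_or_eq_last i with ⟨i', rfl⟩ | rfl <;>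
      rcases Fin.eq_castSucc_or_eq_last j with ⟨j', rfl⟩ | rfl
    · rw [hgcast, hgcast]
      refine hfadj ?_ 
      intro hcon
      exact hij (by rw [hcon])
    · rw [hgcast, hglast]
      exact (hcross b i' a).symm
    · rw [hglast, hgcast]
      exact hcross a j' b
    · exact absurd rfl hij

lemma exists_nat_bound (C ε : ℝ) (hε : 0 < ε) : ∃ n₀ : ℕ, ∀ n : ℕ, n₀ ≤ n → C < ε/2 * n := by
  refine ⟨⌈2*C/ε⌉₊ + 1, fun n hn => ?_⟩
  have h2 : (⌈2*C/ε⌉₊ : ℝ) < n := by exact_mod_cast lt_of_lt_of_le (Nat.lt_succ_self _) hn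
  have h1 : (2*C/ε) < n := lt_of_le_of_lt (Nat.le_ceil _) h2
  have h3 : C = ε/2 * (2*C/ε) := by field_simp
  rw [h3]
  exact mul_lt_mul_of_pos_left h1 (half_pos hε)

theorem es_mindeg : ∀ ρ : ℕ, 1 ≤ ρ → ∀ t : ℕ, 1 ≤ t → ∀ ε : ℝ, 0 < ε →
    ∃ n₀ : ℕ, ∀ (V : Type) (_ : Fintype V) (G : SimpleGraph V), n₀ ≤ Fintype.card V →
      (∀ v : V, (1 - 1/ρ + ε) * Fintype.card V ≤ ((G.neighborSet v).ncard : ℝ)) →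
      MP G (ρ + 1) t := by
  intro ρ hρ
  induction ρ, hρ using Nat.le_induction with
  | base =>
    intro t ht ε hε
    set s : ℕ := max t ⌈2*(t:ℝ)/ε⌉₊ with hs
    have hts : t ≤ s := le_max_left _ _
    have hst : (t:ℝ) ≤ 1 * s * ε / 2 := by
      have h0 : ⌈2*(t:ℝ)/ε⌉₊ ≤ s := by rw [hs]; exact le_max_right _ _
      have h1 : (2*(t:ℝ)/ε) ≤ s := le_trans (Nat.le_ceil _) (by exact_mod_cast h0)
      rw [div_le_iff₀ hε] at h1
      nlinarith
    obtain ⟨n₁, hn₁⟩ := exists_nat_bound (((2^s)^1 * (t-1) : ℕ) : ℝ) ε hε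
    refine ⟨max s n₁, fun V _ G hcard hdeg => ?_⟩
    have hcs : s ≤ Fintype.card V := le_trans (le_max_left _ _) hcard
    have hb : (((2^s)^1 * (t-1) : ℕ) : ℝ) < ε/2 * Fintype.card V :=
      hn₁ _ (le_trans (le_max_right _ _) hcard)
    exact mp_step (le_refl 1) ht hts hε (by exact_mod_cast hst) hb (mp_one hcs)
      (by exact_mod_cast hdeg)
  | succ ρ hρ1 IH =>
    intro t ht ε hε
    have hρR : (1:ℝ) ≤ (ρ:ℝ) := by exact_mod_cast hρ1
    have hε' : (0:ℝ) < 1/ρ - 1/(ρ+1) := by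
      rw [sub_pos]
      apply one_div_lt_one_div_of_lt
      · linarith
      · linarith
    set s : ℕ := max t ⌈2*(t:ℝ)/(((ρ:ℝ)+1)*ε)⌉₊ with hs
    have hts : t ≤ s := le_max_left _ _
    have hsR : (2*(t:ℝ)/(((ρ:ℝ)+1)*ε)) ≤ s := by
      have h0 : ⌈2*(t:ℝ)/(((ρ:ℝ)+1)*ε)⌉₊ ≤ s := by rw [hs]; exact le_max_right _ _
      exact le_trans (Nat.le_ceil _) (by exact_mod_cast h0)
    have hst : (t:ℝ) ≤ ((ρ:ℝ)+1) * s * ε / 2 := by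
      have hpos : (0:ℝ) < ((ρ:ℝ)+1)*ε := by positivity
      rw [div_le_iff₀ hpos] at hsR
      nlinarith
    have hs1 : 1 ≤ s := le_trans ht hts
    obtain ⟨n₁, hn₁⟩ := IH s hs1 (1/ρ - 1/(ρ+1)) hε'
    obtain ⟨n₂, hn₂⟩ := exists_nat_bound (((2^s)^(ρ+1) * (t-1) : ℕ) : ℝ) ε hε
    refine ⟨max n₁ n₂, fun V _ G hcard hdeg => ?_⟩
    have hdeg' : ∀ v : V, (1 - 1/ρ + (1/ρ - 1/(ρ+1))) * Fintype.card V
        ≤ ((G.neighborSet v).ncard : ℝ) := by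
      intro v
      refine le_trans ?_ (hdeg v)
      have hNN : (0:ℝ) ≤ (Fintype.card V : ℝ) := Nat.cast_nonneg _
      have : (1 - 1/(ρ:ℝ) + (1/ρ - 1/(ρ+1))) ≤ (1 - 1/((ρ:ℝ)+1) + ε) := by
        push_cast
        linarith
      push_cast
      nlinarith
    have hmp : MP G (ρ + 1) s := hn₁ V _ G (le_trans (le_max_left _ _) hcard) hdeg'
    have hb : (((2^s)^(ρ+1) * (t-1) : ℕ) : ℝ) < ε/2 * Fintype.card V :=
      hn₂ _ (le_trans (le_max_right _ _) hcard)
    have := mp_step (ρ := ρ+1) (Nat.le_add_left 1 ρ) ht hts hε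
      (by push_cast; exact_mod_cast hst) hb hmp (by push_cast at hdeg ⊢; exact hdeg)
    exact this

lemma exists_mindeg_subset {V : Type*} [DecidableEq V] (G : SimpleGraph V)
    [DecidableRel G.Adj] (c X : ℝ) (hc : 0 ≤ c) (hX : 0 ≤ X) (A : Finset V) :
    ∀ (_ : c * A.card * (A.card + 1) + 2*X < (∑ v ∈ A, ((A.filter (G.Adj v)).card : ℝ))),
    ∃ U ⊆ A, 2*X < (U.card:ℝ)^2 ∧ ∀ v ∈ U, c * U.card ≤ ((U.filter (G.Adj v)).card : ℝ) := by
  induction A using Finset.strongInduction with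
  | _ A IH =>
    intro hA
    by_cases hall : ∀ v ∈ A, c * A.card ≤ ((A.filter (G.Adj v)).card : ℝ)
    · refine ⟨A, subset_rfl, ?_, hall⟩
      have hD : (∑ v ∈ A, ((A.filter (G.Adj v)).card : ℝ)) ≤ (A.card:ℝ)^2 := by
        calc (∑ v ∈ A, ((A.filter (G.Adj v)).card : ℝ))
            ≤ ∑ _v ∈ A, (A.card : ℝ) :=
              Finset.sum_le_sum fun v _ => by exact_mod_cast Finset.card_filter_le _ _
          _ = (A.card:ℝ)^2 := by rw [Finset.sum_const, nsmul_eq_mul]; ring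
      nlinarith [(Nat.cast_nonneg A.card : (0:ℝ) ≤ A.card), hA]
    · push_neg at hall
      obtain ⟨v, hvA, hv⟩ := hall
      have hm1 : 1 ≤ A.card := Finset.card_pos.2 ⟨v, hvA⟩
      -- the deletion identity (in ℕ)
      have hrow : ∀ u ∈ A.erase v,
          ((A.erase v).filter (G.Adj u)).card + (if G.Adj u v then 1 else 0)
            = (A.filter (G.Adj u)).card := by
        intro u _
        rw [Finset.filter_erase]
        by_cases h : G.Adj u v
        · rw [if_pos h]
          exact Finset.card_erase_add_one (Finset.mem_filter.2 ⟨hvA, h⟩)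
        · rw [if_neg h, add_zero, Finset.erase_eq_of_notMem]
          intro hmem
          exact h (Finset.mem_filter.1 hmem).2
      have hcol : ∑ u ∈ A.erase v, (if G.Adj u v then 1 else 0)
          = (A.filter (G.Adj v)).card := by
        rw [Finset.sum_boole]
        norm_cast
        rw [Finset.filter_erase]
        have hnm : v ∉ A.filter (fun u => G.Adj u v) := by
          simp only [Finset.mem_filter, not_and]
          intro _
          exact G.loopless.irrefl v
        rw [Finset.erase_eq_of_notMem hnm]
        congr 1
        apply Finset.filter_congr
        intro u _
        simp [adj_comm]
      have hdel : (∑ u ∈ A.erase v, (((A.erase v).filter (G.Adj u)).card : ℕ))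
            + 2 * (A.filter (G.Adj v)).card
          = ∑ u ∈ A, ((A.filter (G.Adj u)).card : ℕ) := by
        have h1 : ∑ u ∈ A.erase v, (((A.erase v).filter (G.Adj u)).card
              + (if G.Adj u v then 1 else 0))
            = ∑ u ∈ A.erase v, ((A.filter (G.Adj u)).card : ℕ) :=
          Finset.sum_congr rfl hrow
        rw [Finset.sum_add_distrib, hcol] at h1
        have h2 : (∑ u ∈ A.erase v, ((A.filter (G.Adj u)).card : ℕ))
            + (A.filter (G.Adj v)).card = ∑ u ∈ A, ((A.filter (G.Adj u)).card : ℕ) :=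
          Finset.sum_erase_add A _ hvA
        omega
      -- recurse
      have hstep : c * (A.erase v).card * ((A.erase v).card + 1) + 2*X
          < ∑ u ∈ A.erase v, (((A.erase v).filter (G.Adj u)).card : ℝ) := by
        have hcast := congrArg (fun x : ℕ => (x:ℝ)) hdel
        push_cast at hcast
        have hce : ((A.erase v).card : ℝ) = (A.card:ℝ) - 1 := by
          rw [Finset.card_erase_of_mem hvA, Nat.cast_sub hm1, Nat.cast_one]
        rw [hce]
        nlinarith [hA, hv, hcast]
      obtain ⟨U, hU, h2X, hmin⟩ := IH (A.erase v) (Finset.erase_ssubset hvA) hstep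
      exact ⟨U, le_trans hU (Finset.erase_subset _ _), h2X, hmin⟩

lemma ncard_edgeSet_eq {V : Type*} [Fintype V] [DecidableEq V] (G : SimpleGraph V)
    [DecidableRel G.Adj] : G.edgeSet.ncard = G.edgeFinset.card := by
  rw [Set.ncard_eq_toFinset_card', Set.toFinset_card, ← Set.toFinset_card]
  exact congrArg Finset.card (by ext e; simp)

lemma ncard_neighborSet_induce {V : Type*} [Fintype V] [DecidableEq V] (G : SimpleGraph V)
    [DecidableRel G.Adj] (U : Finset V) (v : ↥(↑U : Set V)) :
    ((G.induce (↑U : Set V)).neighborSet v).ncard = (U.filter (G.Adj ↑v)).card := by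
  classical
  rw [Set.ncard_eq_toFinset_card']
  apply Finset.card_bij (fun (w : ↥(↑U : Set V)) _ => (w : V))
  · intro w hw
    rw [Set.mem_toFinset] at hw
    exact Finset.mem_filter.2 ⟨w.2, hw⟩
  · intro w _ w' _ h
    exact Subtype.ext h
  · intro x hx
    rw [Finset.mem_filter] at hx
    exact ⟨⟨x, hx.1⟩, by rw [Set.mem_toFinset]; exact hx.2, rfl⟩

lemma sum_filter_deg_eq {V : Type*} [Fintype V] [DecidableEq V] (G : SimpleGraph V)
    [DecidableRel G.Adj] :
    ∑ v : V, ((univ : Finset V).filter (G.Adj v)).card = 2 * G.edgeFinset.card := by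
  rw [← sum_degrees_eq_twice_card_edges]
  refine Finset.sum_congr rfl fun v _ => ?_
  rw [← neighborFinset_eq_filter]
  rfl

lemma edge_to_mp {r t : ℕ} (hr : 1 ≤ r) (ht : 1 ≤ t) {ε : ℝ} (hε : 0 < ε) :
    ∃ n₀ : ℕ, ∀ n : ℕ, n₀ ≤ n → ∀ G : SimpleGraph (Fin n),
      (1 - 1/r + ε) * n^2 / 2 ≤ (G.edgeSet.ncard : ℝ) → MP G (r+1) t := by
  classical
  obtain ⟨m₀, hm₀⟩ := es_mindeg r hr t ht (ε/2) (half_pos hε)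
  have hsq : (0:ℝ) < Real.sqrt ε := Real.sqrt_pos.2 hε
  refine ⟨max (⌈4*(1+ε)/ε⌉₊ + 1) (⌈2*m₀/Real.sqrt ε⌉₊ + 1), fun n hn G hG => ?_⟩
  have hrR : (1:ℝ) ≤ (r:ℝ) := by exact_mod_cast hr
  have hn1 : (4*(1+ε)/ε) < (n:ℝ) := by
    have : ⌈4*(1+ε)/ε⌉₊ + 1 ≤ n := le_trans (le_max_left _ _) hn
    have h2 : (⌈4*(1+ε)/ε⌉₊ : ℝ) < n := by exact_mod_cast this
    exact lt_of_le_of_lt (Nat.le_ceil _) h2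
  have hn2 : (2*m₀/Real.sqrt ε) < (n:ℝ) := by
    have : ⌈2*m₀/Real.sqrt ε⌉₊ + 1 ≤ n := le_trans (le_max_right _ _) hn
    have h2 : (⌈2*m₀/Real.sqrt ε⌉₊ : ℝ) < n := by exact_mod_cast this
    exact lt_of_le_of_lt (Nat.le_ceil _) h2
  have hn0 : (0:ℝ) ≤ (n:ℝ) := Nat.cast_nonneg n
  set c : ℝ := 1 - 1/r + ε/2 with hc
  have hc0 : 0 ≤ c := by
    have : 1/(r:ℝ) ≤ 1 := by
      rw [div_le_one (by linarith)]; exact hrR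
    rw [hc]; linarith
  set X : ℝ := ε * n^2 / 8 with hX
  have hX0 : 0 ≤ X := by positivity
  -- the total degree-sum bound
  have hD : c * (Fintype.card (Fin n)) * ((Fintype.card (Fin n)) + 1) + 2*X
      < ∑ v : Fin n, (((univ : Finset (Fin n)).filter (G.Adj v)).card : ℝ) := by
    have hsum : ∑ v : Fin n, (((univ : Finset (Fin n)).filter (G.Adj v)).card : ℝ)
        = 2 * (G.edgeSet.ncard : ℝ) := by
      rw [ncard_edgeSet_eq]
      exact_mod_cast congrArg (fun x : ℕ => (x:ℝ)) (sum_filter_deg_eq G)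
    rw [hsum]
    simp only [Fintype.card_fin]
    have h1r : 0 < 1/(r:ℝ) := by positivity
    have hnpos : (0:ℝ) < n := lt_of_le_of_lt (by positivity : (0:ℝ) ≤ 4*(1+ε)/ε) hn1
    have hd1 : 4*(1+ε) < n * ε := (div_lt_iff₀ hε).1 hn1
    rw [hc, hX]
    nlinarith [hG, hd1, hnpos, mul_nonneg h1r.le hn0,
      mul_lt_mul_of_pos_right hd1 hnpos]
  obtain ⟨U, -, h2X, hmin⟩ := exists_mindeg_subset G c X hc0 hX0 univ hD
  -- U is large
  have hUlarge : Real.sqrt ε * n / 2 < (U.card : ℝ) := by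
    have h3 : Real.sqrt ε * n / 2 ≥ 0 := by positivity
    have h4 : (Real.sqrt ε * n / 2)^2 = ε * n^2/4 := by
      rw [div_pow, mul_pow, Real.sq_sqrt hε.le]
      ring
    nlinarith [h2X, h3, h4, (Nat.cast_nonneg U.card : (0:ℝ) ≤ U.card), hX]
  have hm₀U : m₀ ≤ U.card := by
    have h6 : (m₀:ℝ) < Real.sqrt ε * n / 2 := by
      have h7 : 2*(m₀:ℝ) < n * Real.sqrt ε := (div_lt_iff₀ hsq).1 hn2
      linarith
    have h5 : (m₀:ℝ) < U.card := lt_trans h6 hUlarge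
    exact le_of_lt (by exact_mod_cast h5)
  have hcardU : Fintype.card ↥(↑U : Set (Fin n)) = U.card := Fintype.card_coe U
  have hdegU : ∀ v : ↥(↑U : Set (Fin n)),
      (1 - 1/(r:ℝ) + ε/2) * (Fintype.card ↥(↑U : Set (Fin n))) ≤
        (((G.induce (↑U : Set (Fin n))).neighborSet v).ncard : ℝ) := by
    intro v
    rw [ncard_neighborSet_induce, hcardU]
    exact hmin ↑v v.2
  have hmp := hm₀ _ _ (G.induce (↑U : Set (Fin n))) (by rw [hcardU]; exact hm₀U) hdegU
  exact mp_mono Subtype.val Subtype.val_injective (fun a b h => h) hmp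

lemma contains_of_mp {W V : Type*} [Fintype W] (H : SimpleGraph W) {r : ℕ}
    (hχ : H.chromaticNumber = ((r+1 : ℕ) : ℕ∞)) {G : SimpleGraph V}
    (h : MP G (r+1) (Fintype.card W)) : ContainsSub H G := by
  classical
  have hcol : H.Colorable (r+1) := chromaticNumber_le_iff_colorable.1 (le_of_eq hχ)
  obtain ⟨C⟩ := hcol
  obtain ⟨f, hfinj, hfadj⟩ := h
  have hemb : ∀ c : Fin (r+1), Nonempty ({w // C w = c} ↪ Fin (Fintype.card W)) := by
    intro c
    apply Function.Embedding.nonempty_of_card_le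
    rw [Fintype.card_fin]
    exact Fintype.card_subtype_le _
  have φ : ∀ c : Fin (r+1), {w // C w = c} ↪ Fin (Fintype.card W) :=
    fun c => (hemb c).some
  have htrans : ∀ (c c' : Fin (r+1)) (h : c = c') (u : W) (hu : C u = c'),
      φ c' ⟨u, hu⟩ = φ c ⟨u, hu.trans h.symm⟩ := by
    rintro c c' rfl u hu
    rfl
  refine ⟨fun w => f (C w) (φ (C w) ⟨w, rfl⟩), ?_, ?_⟩
  · intro w w' hww
    have hp := hfinj (a₁ := (C w, φ (C w) ⟨w, rfl⟩)) (a₂ := (C w', φ (C w') ⟨w', rfl⟩)) hww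
    rw [Prod.mk.injEq] at hp
    obtain ⟨hcc, hx⟩ := hp
    rw [htrans (C w) (C w') hcc w' rfl] at hx
    have := (φ (C w)).injective hx
    exact congrArg Subtype.val this
  · intro a b hab
    exact hfadj (C.valid hab)

lemma not_containsSub_turan {W : Type*} [Fintype W] (H : SimpleGraph W) {r : ℕ} (n : ℕ)
    (hr : 0 < r) (hχ : H.chromaticNumber = ((r+1 : ℕ) : ℕ∞)) :
    ¬ ContainsSub H (turanGraph n r) := by
  rintro ⟨f, hf, hadj⟩
  have hcol : H.Colorable r := by
    refine ⟨⟨fun w => ⟨(f w : ℕ) % r, Nat.mod_lt _ hr⟩, ?_⟩⟩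
    intro a b hab heq
    rw [Fin.mk.injEq] at heq
    exact hadj hab heq
  have hle := hcol.chromaticNumber_le
  rw [hχ] at hle
  have : r + 1 ≤ r := by exact_mod_cast hle
  omega

lemma turan_card_residue {n r : ℕ} (hr : 0 < r) (c : ℕ) :
    ((univ : Finset (Fin n)).filter (fun w : Fin n => (w : ℕ) % r = c)).card ≤ n / r + 1 := by
  classical
  have h := Finset.card_le_card_of_injOn
    (s := (univ : Finset (Fin n)).filter (fun w : Fin n => (w : ℕ) % r = c))
    (fun w : Fin n => (w : ℕ) / r)
    (t := Finset.range (n / r + 1)) ?_ ?_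
  · simpa using h
  · intro w _
    rw [Finset.mem_coe, Finset.mem_range, Nat.lt_succ_iff]
    exact Nat.div_le_div_right (le_of_lt w.2)
  · intro w₁ hw₁ w₂ hw₂ hdiv
    rw [Finset.mem_coe, Finset.mem_filter] at hw₁ hw₂
    apply Fin.ext
    simp only at hdiv
    rw [← Nat.div_add_mod (w₁ : ℕ) r, ← Nat.div_add_mod (w₂ : ℕ) r, hdiv, hw₁.2, hw₂.2]

lemma turan_edge_lower {n r : ℕ} (hr : 0 < r) :
    (1 - 1/(r:ℝ)) * n^2 / 2 - n ≤ ((turanGraph n r).edgeSet.ncard : ℝ) := by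
  classical
  have hrR : (1:ℝ) ≤ (r:ℝ) := by exact_mod_cast hr
  have hdeg : ∀ v : Fin n, (n:ℝ) - (n:ℝ)/r - 1 ≤
      (((univ : Finset (Fin n)).filter ((turanGraph n r).Adj v)).card : ℝ) := by
    intro v
    have hsplit := Finset.card_filter_add_card_filter_not
      (s := (univ : Finset (Fin n))) (p := fun w => (turanGraph n r).Adj v w)
    have hres : ((univ : Finset (Fin n)).filter (fun w => ¬ (turanGraph n r).Adj v w)).card
        ≤ n / r + 1 := by
      refine le_trans (le_of_eq ?_) (turan_card_residue hr ((v:ℕ) % r))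
      congr 1
      apply Finset.filter_congr
      intro w _
      simp only [turanGraph, not_ne_iff]
      exact eq_comm
    have hcast : ((n/r : ℕ) : ℝ) ≤ (n:ℝ)/r := Nat.cast_div_le
    have hn : ((univ : Finset (Fin n)).filter ((turanGraph n r).Adj v)).card
        + ((univ : Finset (Fin n)).filter (fun w => ¬ (turanGraph n r).Adj v w)).card = n := by
      rw [hsplit]; simp
    have := congrArg (fun x : ℕ => (x:ℝ)) hn
    push_cast at this
    have hresR : (((univ : Finset (Fin n)).filter
        (fun w => ¬ (turanGraph n r).Adj v w)).card : ℝ) ≤ (n:ℝ)/r + 1 := by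
      have := (Nat.cast_le (α := ℝ)).2 hres
      push_cast at this
      linarith [hcast]
    linarith
  have hsum := sum_filter_deg_eq (turanGraph n r)
  have hsumR : (n:ℝ) * ((n:ℝ) - (n:ℝ)/r - 1) ≤ 2 * (((turanGraph n r).edgeSet.ncard : ℝ)) := by
    rw [ncard_edgeSet_eq]
    have h2 : ∑ v : Fin n, ((((univ : Finset (Fin n)).filter ((turanGraph n r).Adj v)).card : ℝ))
        = 2 * ((turanGraph n r).edgeFinset.card : ℝ) := by
      exact_mod_cast congrArg (fun x : ℕ => (x:ℝ)) hsum
    rw [← h2]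
    calc (n:ℝ) * ((n:ℝ) - (n:ℝ)/r - 1)
        = ∑ _v : Fin n, ((n:ℝ) - (n:ℝ)/r - 1) := by
          rw [Finset.sum_const, Finset.card_univ, Fintype.card_fin, nsmul_eq_mul]
      _ ≤ _ := Finset.sum_le_sum fun v _ => hdeg v
  have hr0 : (r:ℝ) ≠ 0 := by positivity
  have hexp : (1 - 1/(r:ℝ)) * n^2 / 2 - n ≤ (n:ℝ) * ((n:ℝ) - (n:ℝ)/r - 1) / 2 := by
    field_simp
    nlinarith [Nat.cast_nonneg (α := ℝ) n,
      mul_nonneg (mul_nonneg (Nat.cast_nonneg (α := ℝ) r) (Nat.cast_nonneg (α := ℝ) r))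
        (Nat.cast_nonneg (α := ℝ) n)]
  linarith


end ErdosStoneAux

set_option maxHeartbeats 1000000 in
/-- **Erdős–Stone–Simonovits.** If `χ(H) = r + 1 ≥ 2`, then
`ex(n,H) = |E(T_{n,r})| + o(n²)`. -/
theorem erdosStoneSimonovits {W : Type} [Fintype W] (H : SimpleGraph W) (r : ℕ)
    (hr : 1 ≤ r) (hχ : H.chromaticNumber = (↑(r + 1) : ℕ∞)) :
    ∀ ε : ℝ, 0 < ε → ∃ n₀ : ℕ, ∀ n : ℕ, n₀ ≤ n →
      |(exNum n H : ℝ) - ((SimpleGraph.turanGraph n r).edgeSet.ncard : ℝ)| ≤ ε * n ^ 2 := by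
  intro ε hε
  classical
  have hW : Nonempty W := by
    by_contra hW
    rw [not_nonempty_iff] at hW
    have hcol0 : H.Colorable 0 := ⟨⟨fun w => isEmptyElim w, fun {a b} h => isEmptyElim a⟩⟩
    have hle := hcol0.chromaticNumber_le
    rw [hχ] at hle
    have : (r+1 : ℕ) ≤ 0 := by exact_mod_cast hle
    omega
  have htW : 1 ≤ Fintype.card W := Fintype.card_pos_iff.2 hW
  obtain ⟨n₁, hn₁⟩ := edge_to_mp hr htW hε
  refine ⟨max n₁ (⌈2/ε⌉₊ + 1), fun n hn => ?_⟩
  have hnn1 : n₁ ≤ n := le_trans (le_max_left _ _) hn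
  have h2ε : 2/ε < (n:ℝ) := by
    have h1 : (⌈2/ε⌉₊ + 1 : ℕ) ≤ n := le_trans (le_max_right _ _) hn
    have h2 : (⌈2/ε⌉₊:ℝ) < n := by exact_mod_cast h1
    exact lt_of_le_of_lt (Nat.le_ceil _) h2
  have hn0R : (0:ℝ) ≤ (n:ℝ) := Nat.cast_nonneg n
  set S : Set ℕ := {m | ∃ G : SimpleGraph (Fin n), ¬ ContainsSub H G ∧ G.edgeSet.ncard = m}
    with hS
  have hex : exNum n H = sSup S := rfl
  have hTm : (turanGraph n r).edgeSet.ncard ∈ S :=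
    ⟨turanGraph n r, not_containsSub_turan H n hr hχ, rfl⟩
  have hbdd : BddAbove S := ⟨Fintype.card (Sym2 (Fin n)), by
    rintro m ⟨G, -, rfl⟩
    calc G.edgeSet.ncard ≤ (Set.univ : Set (Sym2 (Fin n))).ncard :=
        Set.ncard_le_ncard (Set.subset_univ _) Set.finite_univ
      _ = _ := by rw [Set.ncard_univ, Nat.card_eq_fintype_card]⟩
  have hmem : exNum n H ∈ S := by rw [hex]; exact Nat.sSup_mem ⟨_, hTm⟩ hbdd
  have hlow : (turanGraph n r).edgeSet.ncard ≤ exNum n H := by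
    rw [hex]; exact le_csSup hbdd hTm
  have htur := turan_edge_lower (n := n) hr
  have hup : (exNum n H : ℝ) ≤ ((turanGraph n r).edgeSet.ncard : ℝ) + ε * n^2 := by
    by_contra hcon
    push_neg at hcon
    obtain ⟨G₀, hG₀free, hG₀e⟩ := hmem
    have hεn : (2:ℝ) < ε * n := by
      rw [div_lt_iff₀ hε] at h2ε
      linarith
    have hbig : (1 - 1/(r:ℝ) + ε) * n^2/2 ≤ (G₀.edgeSet.ncard : ℝ) := by
      rw [hG₀e]
      nlinarith [htur, hcon, mul_le_mul_of_nonneg_right hεn.le hn0R]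
    exact hG₀free (contains_of_mp H hχ (hn₁ n hnn1 G₀ hbig))
  have hlowR : ((turanGraph n r).edgeSet.ncard : ℝ) ≤ (exNum n H : ℝ) := by exact_mod_cast hlow
  rw [abs_of_nonneg (sub_nonneg.2 hlowR)]
  linarith
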